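/- Let A, B, C, D be four pairwise distinct points in ℝ² such that dist(A,B) = dist(B,C) = dist(C,D) = dist(D,A) = 1. Then B - A = -(D - C). -/
import Mathlib

private lemma dist_sq_aux (x y : EuclideanSpace ℝ (Fin 2)) (h : dist x y = 1) :
    (x 0 - y 0) ^ 2 + (x 1 - y 1) ^ 2 = 1 := by
  have h2 : dist x y ^ 2 = 1 := by rw [h]; norm_num
  rw [EuclideanSpace.dist_eq, Real.sq_sqrt (by positivity)] at h2
  simpa [Fin.sum_univ_two, Real.dist_eq, sq_abs] using h2

private lemma ne_sq_aux (x y : EuclideanSpace ℝ (Fin 2)) (h : x ≠ y) :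
    (x 0 - y 0) ^ 2 + (x 1 - y 1) ^ 2 ≠ 0 := by
  intro h0
  apply h
  have e0 : x 0 - y 0 = 0 := by nlinarith [sq_nonneg (x 0 - y 0), sq_nonneg (x 1 - y 1)]
  have e1 : x 1 - y 1 = 0 := by nlinarith [sq_nonneg (x 0 - y 0), sq_nonneg (x 1 - y 1)]
  ext i
  fin_cases i <;> simp <;> linarith

private lemma quad_aux (u1 u2 v1 v2 w1 w2 : ℝ)
    (h1 : u1 ^ 2 + u2 ^ 2 = 1) (h2 : v1 ^ 2 + v2 ^ 2 = 1) (h3 : w1 ^ 2 + w2 ^ 2 = 1)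
    (h4 : (u1 + v1 + w1) ^ 2 + (u2 + v2 + w2) ^ 2 = 1)
    (hs : (u1 + v1) ^ 2 + (u2 + v2) ^ 2 ≠ 0)
    (ht : (v1 + w1) ^ 2 + (v2 + w2) ^ 2 ≠ 0) :
    u1 + w1 = 0 ∧ u2 + w2 = 0 := by
  set a := u1 * v1 + u2 * v2 with hadef
  set b := u1 * w1 + u2 * w2 with hbdef
  set c := v1 * w1 + v2 * w2 with hcdef
  have habc : a + b + c = -1 := by
    rw [hadef, hbdef, hcdef]; linear_combination (h4 - h1 - h2 - h3) / 2
  have hGram : 1 - a ^ 2 - b ^ 2 - c ^ 2 + 2 * a * b * c = 0 := by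
    rw [hadef, hbdef, hcdef]
    linear_combination ((v1*w1+v2*w2)^2 - 1) * h1 +
      ((u1*w1+u2*w2)^2 - (u1^2+u2^2)) * h2 +
      ((u1*v1+u2*v2)^2 - (u1^2+u2^2)*(v1^2+v2^2)) * h3
  have ha : a ≠ -1 := by
    intro h; apply hs
    rw [hadef] at h; linear_combination h1 + h2 + 2 * h
  have hc : c ≠ -1 := by
    intro h; apply ht
    rw [hcdef] at h; linear_combination h2 + h3 + 2 * h
  have key : (1 + b) * (a * c - b) = 0 := by
    linear_combination hGram / 2 + ((a + c - 1 - b) / 2) * habc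
  have hb : b = -1 := by
    rcases mul_eq_zero.mp key with h | h
    · linarith
    · exfalso
      have hfac : (1 + a) * (1 + c) = 0 := by linear_combination habc + h
      rcases mul_eq_zero.mp hfac with h' | h'
      · exact ha (by linarith)
      · exact hc (by linarith)
  have hsum : (u1 + w1) ^ 2 + (u2 + w2) ^ 2 = 0 := by
    rw [hbdef] at hb; linear_combination h1 + h3 + 2 * hb
  constructor
  · nlinarith [sq_nonneg (u1 + w1), sq_nonneg (u2 + w2)]
  · nlinarith [sq_nonneg (u1 + w1), sq_nonneg (u2 + w2)]

theorem stmt_1 (A B C D : EuclideanSpace ℝ (Fin 2))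
    (hAB : A ≠ B) (hAC : A ≠ C) (hAD : A ≠ D)
    (hBC : B ≠ C) (hBD : B ≠ D) (hCD : C ≠ D)
    (dAB : dist A B = 1) (dBC : dist B C = 1)
    (dCD : dist C D = 1) (dDA : dist D A = 1) :
    B - A = -(D - C) := by
  have h1 : (B 0 - A 0) ^ 2 + (B 1 - A 1) ^ 2 = 1 := by
    linear_combination dist_sq_aux A B dAB
  have h2 : (C 0 - B 0) ^ 2 + (C 1 - B 1) ^ 2 = 1 := by
    linear_combination dist_sq_aux B C dBC
  have h3 : (D 0 - C 0) ^ 2 + (D 1 - C 1) ^ 2 = 1 := by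
    linear_combination dist_sq_aux C D dCD
  have h4 : ((B 0 - A 0) + (C 0 - B 0) + (D 0 - C 0)) ^ 2
      + ((B 1 - A 1) + (C 1 - B 1) + (D 1 - C 1)) ^ 2 = 1 := by
    linear_combination dist_sq_aux D A dDA
  have hs : ((B 0 - A 0) + (C 0 - B 0)) ^ 2 + ((B 1 - A 1) + (C 1 - B 1)) ^ 2 ≠ 0 := by
    intro h0
    exact ne_sq_aux C A (fun h => hAC h.symm) (by linear_combination h0)
  have ht : ((C 0 - B 0) + (D 0 - C 0)) ^ 2 + ((C 1 - B 1) + (D 1 - C 1)) ^ 2 ≠ 0 := by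
    intro h0
    exact ne_sq_aux D B (fun h => hBD h.symm) (by linear_combination h0)
  obtain ⟨e1, e2⟩ := quad_aux _ _ _ _ _ _ h1 h2 h3 h4 hs ht
  ext i
  fin_cases i <;> simp <;> linarith
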